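/- Let A be a finite-dimensional involutory Hopf algebra over ℂ with n = dim_ℂ A, and let B : A⊗A⊗A⊗A → A⊗A⊗A⊗A be the plaquette operator B(x₁ ⊗ x₂ ⊗ x₃ ⊗ x₄) = ∑ χ(x₁₍₁₎·x₂₍₁₎·x₃₍₁₎·x₄₍₁₎) · (x₁₍₂₎ ⊗ x₂₍₂₎ ⊗ x₃₍₂₎ ⊗ x₄₍₂₎). Then for every integer k ≥ 1, Bᵏ = n^{k−1}·B; in particular B ∘ B = n·B. -/

import Mathlib

/-!
STATEMENT 5: For a finite-dimensional involutory Hopf algebra A over ℂ with n = dim_ℂ A,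
the plaquette operator B on A⊗A⊗A⊗A,
  B(x₁ ⊗ x₂ ⊗ x₃ ⊗ x₄) = ∑ χ(x₁₍₁₎x₂₍₁₎x₃₍₁₎x₄₍₁₎) x₁₍₂₎ ⊗ x₂₍₂₎ ⊗ x₃₍₂₎ ⊗ x₄₍₂₎,
satisfies Bᵏ = n^{k−1}·B for every k ≥ 1; in particular B ∘ B = n·B.
-/

open HopfAlgebra TensorProduct

noncomputable section

/-- The trace character of the left regular representation. -/
def traceChar (A : Type*) [Ring A] [Algebra ℂ A] : A →ₗ[ℂ] ℂ :=
  (LinearMap.trace ℂ A) ∘ₗ (LinearMap.mul ℂ A)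

variable (A : Type*) [Ring A] [HopfAlgebra ℂ A]

/-- The fourfold tensor product A⊗A⊗A⊗A. -/
abbrev T4 := A ⊗[ℂ] (A ⊗[ℂ] (A ⊗[ℂ] A))

/-- `(a ⊗ b) ⊗ (c ⊗ t) ↦ (a*c) ⊗ (b ⊗ t)`: multiply the first (Sweedler) legs and
collect the second legs. -/
def mulStep (N : Type*) [AddCommGroup N] [Module ℂ N] :
    ((A ⊗[ℂ] A) ⊗[ℂ] (A ⊗[ℂ] N)) →ₗ[ℂ] (A ⊗[ℂ] (A ⊗[ℂ] N)) :=
  (TensorProduct.map (LinearMap.mul' ℂ A) LinearMap.id) ∘ₗ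
    (TensorProduct.tensorTensorTensorComm ℂ A A A N).toLinearMap

/-- Comultiplication of each of the four tensor factors. -/
def comul4 : T4 A →ₗ[ℂ]
    ((A ⊗[ℂ] A) ⊗[ℂ] ((A ⊗[ℂ] A) ⊗[ℂ] ((A ⊗[ℂ] A) ⊗[ℂ] (A ⊗[ℂ] A)))) :=
  TensorProduct.map (Coalgebra.comul (R := ℂ))
    (TensorProduct.map (Coalgebra.comul (R := ℂ))
      (TensorProduct.map (Coalgebra.comul (R := ℂ)) (Coalgebra.comul (R := ℂ))))

/-- The plaquette operator
`B(x₁ ⊗ x₂ ⊗ x₃ ⊗ x₄) = ∑ χ(x₁₍₁₎x₂₍₁₎x₃₍₁₎x₄₍₁₎) x₁₍₂₎ ⊗ x₂₍₂₎ ⊗ x₃₍₂₎ ⊗ x₄₍₂₎`. -/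
def plaquetteOp : T4 A →ₗ[ℂ] T4 A :=
  (TensorProduct.lid ℂ (T4 A)).toLinearMap
    ∘ₗ (LinearMap.rTensor (T4 A) (traceChar A))
    ∘ₗ (mulStep A (A ⊗[ℂ] (A ⊗[ℂ] A)))
    ∘ₗ (LinearMap.lTensor (A ⊗[ℂ] A) (mulStep A (A ⊗[ℂ] A)))
    ∘ₗ (LinearMap.lTensor (A ⊗[ℂ] A) (LinearMap.lTensor (A ⊗[ℂ] A) (mulStep A A)))
    ∘ₗ (comul4 A)

section Aux

open Coalgebra LinearMap

set_option synthInstance.maxHeartbeats 1000000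
set_option maxHeartbeats 1000000

variable {B : Type*} [Ring B] [HopfAlgebra ℂ B]



/-- ψ(a ⊗ b) = Δa * (1 ⊗ b). -/
def psiMap (B : Type*) [Ring B] [HopfAlgebra ℂ B] : B ⊗[ℂ] B →ₗ[ℂ] B ⊗[ℂ] B :=
  (LinearMap.mul' ℂ (B ⊗[ℂ] B)) ∘ₗ
    (TensorProduct.map (Coalgebra.comul (R := ℂ)) (TensorProduct.mk ℂ B B 1))

/-- φ(a ⊗ b) = ((1 ⊗ S)Δa) * (1 ⊗ b). -/
def phiMap (B : Type*) [Ring B] [HopfAlgebra ℂ B] : B ⊗[ℂ] B →ₗ[ℂ] B ⊗[ℂ] B :=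
  (LinearMap.mul' ℂ (B ⊗[ℂ] B)) ∘ₗ
    (TensorProduct.map ((LinearMap.lTensor B (antipode (R := ℂ))) ∘ₗ Coalgebra.comul (R := ℂ))
      (TensorProduct.mk ℂ B B 1))

lemma psiMap_tmul (a b : B) :
    psiMap B (a ⊗ₜ[ℂ] b) = (Coalgebra.comul (R := ℂ) a) * ((1 : B) ⊗ₜ[ℂ] b) := by
  simp [psiMap, LinearMap.mul'_apply]

lemma phiMap_tmul (a b : B) :
    phiMap B (a ⊗ₜ[ℂ] b) =
      ((LinearMap.lTensor B (antipode (R := ℂ))) (Coalgebra.comul (R := ℂ) a)) * ((1 : B) ⊗ₜ[ℂ] b) := by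
  simp [phiMap, LinearMap.mul'_apply]

lemma counit_right_smul (a : B) (r : Coalgebra.Repr ℂ a (B × B)) :
    ∑ i ∈ r.index, counit (R := ℂ) (r.right i) • r.left i = a := by
  have h := Coalgebra.sum_tmul_counit_eq (R := ℂ) r
  apply_fun (TensorProduct.rid ℂ B) at h
  simp only [map_sum, TensorProduct.rid_tmul] at h
  simpa using h

lemma psi_comp_phi : psiMap B ∘ₗ phiMap B = LinearMap.id := by
  apply TensorProduct.ext'
  intro a b
  simp only [LinearMap.comp_apply, LinearMap.id_apply]
  set r := ℛ ℂ a with hr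
  have hφ : phiMap B (a ⊗ₜ[ℂ] b)
      = ∑ i ∈ r.index, r.left i ⊗ₜ[ℂ] (antipode (R := ℂ) (r.right i) * b) := by
    rw [phiMap_tmul, ← r.eq]
    simp [Finset.sum_mul, Algebra.TensorProduct.tmul_mul_tmul]
  rw [hφ, map_sum]
  set a₁ : (i : B × B) → Coalgebra.Repr ℂ (r.left i) (B × B) := fun i => ℛ ℂ (r.left i) with ha₁
  set a₂ : (i : B × B) → Coalgebra.Repr ℂ (r.right i) (B × B) := fun i => ℛ ℂ (r.right i) with ha₂
  have hψ : ∀ i ∈ r.index, psiMap B (r.left i ⊗ₜ[ℂ] (antipode (R := ℂ) (r.right i) * b))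
      = ∑ j ∈ (a₁ i).index,
          (a₁ i).left j ⊗ₜ[ℂ] ((a₁ i).right j * (antipode (R := ℂ) (r.right i) * b)) := by
    intro i _
    rw [psiMap_tmul, ← (a₁ i).eq]
    simp [Finset.sum_mul, Algebra.TensorProduct.tmul_mul_tmul]
  rw [Finset.sum_congr rfl hψ]
  have key := Coalgebra.sum_tmul_tmul_eq (R := ℂ) r a₁ a₂
  apply_fun (LinearMap.lTensor B ((LinearMap.mul' ℂ B) ∘ₗ
      (LinearMap.lTensor B ((LinearMap.mulRight ℂ b) ∘ₗ (antipode (R := ℂ)))))) at key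
  simp only [map_sum, LinearMap.lTensor_tmul, LinearMap.comp_apply, LinearMap.mul'_apply,
    LinearMap.mulRight_apply] at key
  rw [key]
  have inner : ∀ i ∈ r.index,
      ∑ j ∈ (a₂ i).index,
        r.left i ⊗ₜ[ℂ] ((a₂ i).left j * (antipode (R := ℂ) ((a₂ i).right j) * b))
      = counit (R := ℂ) (r.right i) • (r.left i ⊗ₜ[ℂ] b) := by
    intro i _
    have : ∀ j, (a₂ i).left j * (antipode (R := ℂ) ((a₂ i).right j) * b)
        = ((a₂ i).left j * antipode (R := ℂ) ((a₂ i).right j)) * b := by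
      intro j; rw [mul_assoc]
    simp_rw [this, ← tmul_sum, ← Finset.sum_mul,
      HopfAlgebra.sum_mul_antipode_eq_smul (R := ℂ) (a₂ i), smul_mul_assoc, one_mul, tmul_smul]
  rw [Finset.sum_congr rfl inner]
  have hfin : (∑ x ∈ r.index, counit (R := ℂ) (r.right x) • r.left x) ⊗ₜ[ℂ] b = a ⊗ₜ[ℂ] b := by
    rw [counit_right_smul a r]
  rw [← hfin, TensorProduct.sum_tmul]
  exact Finset.sum_congr rfl fun i _ => smul_tmul' _ _ _

lemma phi_comp_psi : phiMap B ∘ₗ psiMap B = LinearMap.id := by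
  apply TensorProduct.ext'
  intro a b
  simp only [LinearMap.comp_apply, LinearMap.id_apply]
  set r := ℛ ℂ a with hr
  have hψ : psiMap B (a ⊗ₜ[ℂ] b)
      = ∑ i ∈ r.index, r.left i ⊗ₜ[ℂ] (r.right i * b) := by
    rw [psiMap_tmul, ← r.eq]
    simp [Finset.sum_mul, Algebra.TensorProduct.tmul_mul_tmul]
  rw [hψ, map_sum]
  set a₁ : (i : B × B) → Coalgebra.Repr ℂ (r.left i) (B × B) := fun i => ℛ ℂ (r.left i) with ha₁
  set a₂ : (i : B × B) → Coalgebra.Repr ℂ (r.right i) (B × B) := fun i => ℛ ℂ (r.right i) with ha₂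
  have hφ : ∀ i ∈ r.index, phiMap B (r.left i ⊗ₜ[ℂ] (r.right i * b))
      = ∑ j ∈ (a₁ i).index,
          (a₁ i).left j ⊗ₜ[ℂ] (antipode (R := ℂ) ((a₁ i).right j) * (r.right i * b)) := by
    intro i _
    rw [phiMap_tmul, ← (a₁ i).eq]
    simp [Finset.sum_mul, Algebra.TensorProduct.tmul_mul_tmul]
  rw [Finset.sum_congr rfl hφ]
  have key := Coalgebra.sum_tmul_tmul_eq (R := ℂ) r a₁ a₂
  apply_fun (LinearMap.lTensor B ((LinearMap.mul' ℂ B) ∘ₗ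
      (TensorProduct.map (antipode (R := ℂ)) (LinearMap.mulRight ℂ b)))) at key
  simp only [map_sum, LinearMap.lTensor_tmul, LinearMap.comp_apply, TensorProduct.map_tmul,
    LinearMap.mul'_apply, LinearMap.mulRight_apply] at key
  rw [key]
  have inner : ∀ i ∈ r.index,
      ∑ j ∈ (a₂ i).index,
        r.left i ⊗ₜ[ℂ] (antipode (R := ℂ) ((a₂ i).left j) * ((a₂ i).right j * b))
      = counit (R := ℂ) (r.right i) • (r.left i ⊗ₜ[ℂ] b) := by
    intro i _
    have : ∀ j, antipode (R := ℂ) ((a₂ i).left j) * ((a₂ i).right j * b)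
        = (antipode (R := ℂ) ((a₂ i).left j) * (a₂ i).right j) * b := by
      intro j; rw [mul_assoc]
    simp_rw [this, ← tmul_sum, ← Finset.sum_mul,
      HopfAlgebra.sum_antipode_mul_eq_smul (R := ℂ) (a₂ i), smul_mul_assoc, one_mul, tmul_smul]
  rw [Finset.sum_congr rfl inner]
  have hfin : (∑ x ∈ r.index, counit (R := ℂ) (r.right x) • r.left x) ⊗ₜ[ℂ] b = a ⊗ₜ[ℂ] b := by
    rw [counit_right_smul a r]
  rw [← hfin, TensorProduct.sum_tmul]
  exact Finset.sum_congr rfl fun i _ => smul_tmul' _ _ _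

/-- The operator of left multiplication by `comul c` on `B ⊗ B`, as a linear map in `c`. -/
def Emap (B : Type*) [Ring B] [HopfAlgebra ℂ B] : B →ₗ[ℂ] (B ⊗[ℂ] B →ₗ[ℂ] B ⊗[ℂ] B) :=
  (TensorProduct.homTensorHomMap (RingHom.id ℂ) B B B B) ∘ₗ
    (TensorProduct.map (LinearMap.mul ℂ B) (LinearMap.mul ℂ B)) ∘ₗ (Coalgebra.comul (R := ℂ))

lemma homTensorHom_mul (v u : B ⊗[ℂ] B) :
    (TensorProduct.homTensorHomMap (RingHom.id ℂ) B B B B)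
      ((TensorProduct.map (LinearMap.mul ℂ B) (LinearMap.mul ℂ B)) v) u = v * u := by
  induction v using TensorProduct.induction_on with
  | zero => simp [zero_mul]
  | tmul x y =>
    rw [TensorProduct.map_tmul, TensorProduct.homTensorHomMap_apply]
    induction u using TensorProduct.induction_on with
    | zero => simp [mul_zero]
    | tmul p q =>
      simp [Algebra.TensorProduct.tmul_mul_tmul]
    | add u₁ u₂ h₁ h₂ => simp [mul_add, h₁, h₂]
  | add v₁ v₂ h₁ h₂ => simp [add_mul, h₁, h₂]

lemma Emap_apply (c : B) (u : B ⊗[ℂ] B) :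
    Emap B c u = (Coalgebra.comul (R := ℂ) c) * u := by
  simp only [Emap, LinearMap.comp_apply]
  exact homTensorHom_mul _ _

lemma Emap_comp_psi (c : B) :
    Emap B c ∘ₗ psiMap B = psiMap B ∘ₗ LinearMap.rTensor B ((LinearMap.mul ℂ B) c) := by
  apply TensorProduct.ext'
  intro a b
  simp only [LinearMap.comp_apply, LinearMap.rTensor_tmul, LinearMap.mul_apply']
  rw [psiMap_tmul, psiMap_tmul, Emap_apply, Bialgebra.comul_mul, mul_assoc]


lemma trace_map_tensor [FiniteDimensional ℂ B] (f g : B →ₗ[ℂ] B) :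
    LinearMap.trace ℂ (B ⊗[ℂ] B) (TensorProduct.map f g)
      = LinearMap.trace ℂ B f * LinearMap.trace ℂ B g := by
  exact LinearMap.trace_tensorProduct' f g

lemma key_trace [FiniteDimensional ℂ B] (c : B) (r : Coalgebra.Repr ℂ c (B × B)) :
    ∑ i ∈ r.index, traceChar B (r.left i) * traceChar B (r.right i)
      = (Module.finrank ℂ B : ℂ) * traceChar B c := by
  have h1 : LinearMap.trace ℂ (B ⊗[ℂ] B) (Emap B c)
      = ∑ i ∈ r.index, traceChar B (r.left i) * traceChar B (r.right i) := by
    rw [Emap]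
    simp only [LinearMap.comp_apply]
    rw [← r.eq, map_sum, map_sum, map_sum]
    refine Finset.sum_congr rfl fun i _ => ?_
    rw [TensorProduct.map_tmul, TensorProduct.homTensorHomMap_apply, trace_map_tensor]
    rfl
  have hψφ : psiMap B * phiMap B = (1 : Module.End ℂ (B ⊗[ℂ] B)) := by
    rw [Module.End.mul_eq_comp, psi_comp_phi]; rfl
  have hφψ : phiMap B * psiMap B = (1 : Module.End ℂ (B ⊗[ℂ] B)) := by
    rw [Module.End.mul_eq_comp, phi_comp_psi]; rfl
  have hEψ : Emap B c * psiMap B = psiMap B * LinearMap.rTensor B ((LinearMap.mul ℂ B) c) := by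
    rw [Module.End.mul_eq_comp, Module.End.mul_eq_comp, Emap_comp_psi]
  have h2 : LinearMap.trace ℂ (B ⊗[ℂ] B) (Emap B c)
      = traceChar B c * (Module.finrank ℂ B : ℂ) := by
    calc LinearMap.trace ℂ (B ⊗[ℂ] B) (Emap B c)
        = LinearMap.trace ℂ (B ⊗[ℂ] B) (Emap B c * (psiMap B * phiMap B)) := by rw [hψφ, mul_one]
      _ = LinearMap.trace ℂ (B ⊗[ℂ] B) ((Emap B c * psiMap B) * phiMap B) := by rw [mul_assoc]
      _ = LinearMap.trace ℂ (B ⊗[ℂ] B) (phiMap B * (Emap B c * psiMap B)) :=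
          (LinearMap.trace_mul_comm ℂ _ _).symm
      _ = LinearMap.trace ℂ (B ⊗[ℂ] B) ((phiMap B * psiMap B) * LinearMap.rTensor B ((LinearMap.mul ℂ B) c)) := by
          rw [hEψ, ← mul_assoc]
      _ = LinearMap.trace ℂ (B ⊗[ℂ] B) (LinearMap.rTensor B ((LinearMap.mul ℂ B) c)) := by
          rw [hφψ, one_mul]
      _ = traceChar B c * (Module.finrank ℂ B : ℂ) := by
          have : LinearMap.rTensor B ((LinearMap.mul ℂ B) c)
              = TensorProduct.map ((LinearMap.mul ℂ B) c) LinearMap.id := rfl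
          rw [this, trace_map_tensor, LinearMap.trace_id]
          rfl
  rw [← h1, h2, mul_comm]


section Coact

variable (B) (N : Type*) [AddCommGroup N] [Module ℂ N]

lemma mulStep_tmul (x y c : B) (n : N) :
    mulStep B N ((x ⊗ₜ[ℂ] y) ⊗ₜ[ℂ] (c ⊗ₜ[ℂ] n)) = (x * c) ⊗ₜ[ℂ] (y ⊗ₜ[ℂ] n) := by
  simp [mulStep, tensorTensorTensorComm_tmul]

/-- Tensor-step coaction: `a ⊗ n ↦ ∑ a₍₁₎ n₍₋₁₎ ⊗ (a₍₂₎ ⊗ n₍₀₎)`. -/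
def stepRho (ρ : N →ₗ[ℂ] B ⊗[ℂ] N) : B ⊗[ℂ] N →ₗ[ℂ] B ⊗[ℂ] (B ⊗[ℂ] N) :=
  mulStep B N ∘ₗ TensorProduct.map (Coalgebra.comul (R := ℂ)) ρ

/-- Coassociativity of a coaction. -/
def IsCoassoc (N : Type*) [AddCommMonoid N] [Module ℂ N] (ρ : N →ₗ[ℂ] B ⊗[ℂ] N) : Prop :=
  (TensorProduct.assoc ℂ B B N).toLinearMap ∘ₗ
      LinearMap.rTensor N (Coalgebra.comul (R := ℂ)) ∘ₗ ρ = LinearMap.lTensor B ρ ∘ₗ ρ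

lemma comul_isCoassoc : IsCoassoc B B (Coalgebra.comul (R := ℂ)) := Coalgebra.coassoc

/-- `(x ⊗ (y₁ ⊗ y₂)) ⊗ (c ⊗ (d ⊗ n)) ↦ xc ⊗ (y₁d ⊗ (y₂ ⊗ n))`. -/
def xiMap : (B ⊗[ℂ] (B ⊗[ℂ] B)) ⊗[ℂ] (B ⊗[ℂ] (B ⊗[ℂ] N)) →ₗ[ℂ] B ⊗[ℂ] (B ⊗[ℂ] (B ⊗[ℂ] N)) :=
  TensorProduct.map (LinearMap.mul' ℂ B) (mulStep B N) ∘ₗ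
    (tensorTensorTensorComm ℂ B (B ⊗[ℂ] B) B (B ⊗[ℂ] N)).toLinearMap

lemma xiMap_tmul (x y₁ y₂ c d : B) (n : N) :
    xiMap B N ((x ⊗ₜ[ℂ] (y₁ ⊗ₜ[ℂ] y₂)) ⊗ₜ[ℂ] (c ⊗ₜ[ℂ] (d ⊗ₜ[ℂ] n)))
      = (x * c) ⊗ₜ[ℂ] ((y₁ * d) ⊗ₜ[ℂ] (y₂ ⊗ₜ[ℂ] n)) := by
  simp [xiMap, tensorTensorTensorComm_tmul, mulStep_tmul]

/-- `((x₁ ⊗ x₂) ⊗ y) ⊗ ((c₁ ⊗ c₂) ⊗ n) ↦ x₁c₁ ⊗ (x₂c₂ ⊗ (y ⊗ n))`. -/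
def xi'Map : ((B ⊗[ℂ] B) ⊗[ℂ] B) ⊗[ℂ] ((B ⊗[ℂ] B) ⊗[ℂ] N) →ₗ[ℂ] B ⊗[ℂ] (B ⊗[ℂ] (B ⊗[ℂ] N)) :=
  (TensorProduct.assoc ℂ B B (B ⊗[ℂ] N)).toLinearMap ∘ₗ
    TensorProduct.map
      ((TensorProduct.map (LinearMap.mul' ℂ B) (LinearMap.mul' ℂ B)) ∘ₗ
        (tensorTensorTensorComm ℂ B B B B).toLinearMap) LinearMap.id ∘ₗ
    (tensorTensorTensorComm ℂ (B ⊗[ℂ] B) B (B ⊗[ℂ] B) N).toLinearMap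

lemma xi'Map_tmul (x₁ x₂ y c₁ c₂ : B) (n : N) :
    xi'Map B N (((x₁ ⊗ₜ[ℂ] x₂) ⊗ₜ[ℂ] y) ⊗ₜ[ℂ] ((c₁ ⊗ₜ[ℂ] c₂) ⊗ₜ[ℂ] n))
      = (x₁ * c₁) ⊗ₜ[ℂ] ((x₂ * c₂) ⊗ₜ[ℂ] (y ⊗ₜ[ℂ] n)) := by
  simp [xi'Map, tensorTensorTensorComm_tmul]

lemma xi'_eq_xi_assoc :
    xi'Map B N = xiMap B N ∘ₗ
      TensorProduct.map (TensorProduct.assoc ℂ B B B).toLinearMap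
        (TensorProduct.assoc ℂ B B N).toLinearMap := by
  apply TensorProduct.ext'
  intro u v
  induction u using TensorProduct.induction_on with
  | zero => simp
  | add u₁ u₂ h₁ h₂ => simp [add_tmul, h₁, h₂]
  | tmul w y =>
    induction w using TensorProduct.induction_on with
    | zero => simp [zero_tmul]
    | add w₁ w₂ h₁ h₂ => simp only [add_tmul] at *; simp [h₁, h₂]
    | tmul x₁ x₂ =>
      induction v using TensorProduct.induction_on with
      | zero => simp
      | add v₁ v₂ h₁ h₂ => simp [tmul_add, h₁, h₂]
      | tmul w' n =>
        induction w' using TensorProduct.induction_on with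
        | zero => simp [zero_tmul]
        | add w₁ w₂ h₁ h₂ => simp only [add_tmul, tmul_add] at *; simp [h₁, h₂]
        | tmul c₁ c₂ =>
          simp [xi'Map_tmul, xiMap_tmul]


lemma assoc_mul_xi' (p q : B ⊗[ℂ] B) (y : B) (n : N) :
    (TensorProduct.assoc ℂ B B (B ⊗[ℂ] N)) ((p * q) ⊗ₜ[ℂ] (y ⊗ₜ[ℂ] n))
      = xi'Map B N ((p ⊗ₜ[ℂ] y) ⊗ₜ[ℂ] (q ⊗ₜ[ℂ] n)) := by
  induction p using TensorProduct.induction_on with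
  | zero => simp [zero_mul, add_tmul]
  | add p₁ p₂ h₁ h₂ => simp only [add_mul, add_tmul, map_add, h₁, h₂]
  | tmul p₁ p₂ =>
    induction q using TensorProduct.induction_on with
    | zero => simp [mul_zero, add_tmul]
    | add q₁ q₂ h₁ h₂ => simp only [mul_add, add_tmul, tmul_add, map_add, h₁, h₂]
    | tmul q₁ q₂ =>
      simp [Algebra.TensorProduct.tmul_mul_tmul, xi'Map_tmul]

lemma helper1elem (u : B ⊗[ℂ] B) (v : B ⊗[ℂ] N) :
    (TensorProduct.assoc ℂ B B (B ⊗[ℂ] N))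
        (LinearMap.rTensor (B ⊗[ℂ] N) (Coalgebra.comul (R := ℂ)) (mulStep B N (u ⊗ₜ[ℂ] v)))
      = xi'Map B N ((LinearMap.rTensor B (Coalgebra.comul (R := ℂ)) u) ⊗ₜ[ℂ]
          (LinearMap.rTensor N (Coalgebra.comul (R := ℂ)) v)) := by
  induction u using TensorProduct.induction_on with
  | zero => simp [add_tmul, zero_tmul]
  | add u₁ u₂ h₁ h₂ => simp only [add_tmul, map_add, h₁, h₂]
  | tmul x y =>
    induction v using TensorProduct.induction_on with
    | zero => simp [tmul_add, tmul_zero]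
    | add v₁ v₂ h₁ h₂ => simp only [tmul_add, add_tmul, map_add, h₁, h₂]
    | tmul c n =>
      rw [mulStep_tmul]
      simp only [LinearMap.rTensor_tmul]
      rw [Bialgebra.comul_mul]
      exact assoc_mul_xi' B N _ _ _ _

lemma tmul_mulStep_xi (x c : B) (p : B ⊗[ℂ] B) (q : B ⊗[ℂ] N) :
    (x * c) ⊗ₜ[ℂ] (mulStep B N (p ⊗ₜ[ℂ] q)) = xiMap B N ((x ⊗ₜ[ℂ] p) ⊗ₜ[ℂ] (c ⊗ₜ[ℂ] q)) := by
  induction p using TensorProduct.induction_on with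
  | zero => simp [zero_tmul, tmul_zero]
  | add p₁ p₂ h₁ h₂ => simp only [add_tmul, tmul_add, map_add, h₁, h₂]
  | tmul p₁ p₂ =>
    induction q using TensorProduct.induction_on with
    | zero => simp [tmul_zero]
    | add q₁ q₂ h₁ h₂ => simp only [tmul_add, map_add, h₁, h₂]
    | tmul q₁ q₂ =>
      rw [mulStep_tmul, xiMap_tmul]

lemma helper2elem (ρ : N →ₗ[ℂ] B ⊗[ℂ] N) (u : B ⊗[ℂ] B) (v : B ⊗[ℂ] N) :
    LinearMap.lTensor B (stepRho B N ρ) (mulStep B N (u ⊗ₜ[ℂ] v))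
      = xiMap B N ((LinearMap.lTensor B (Coalgebra.comul (R := ℂ)) u) ⊗ₜ[ℂ]
          (LinearMap.lTensor B ρ v)) := by
  induction u using TensorProduct.induction_on with
  | zero => simp [zero_tmul]
  | add u₁ u₂ h₁ h₂ => simp only [add_tmul, map_add, h₁, h₂]
  | tmul x y =>
    induction v using TensorProduct.induction_on with
    | zero => simp [tmul_zero]
    | add v₁ v₂ h₁ h₂ => simp only [tmul_add, add_tmul, map_add, h₁, h₂]
    | tmul c n =>
      rw [mulStep_tmul]
      simp only [LinearMap.lTensor_tmul]
      have : stepRho B N ρ (y ⊗ₜ[ℂ] n) = mulStep B N ((Coalgebra.comul (R := ℂ) y) ⊗ₜ[ℂ] (ρ n)) := by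
        simp [stepRho]
      rw [this]
      exact tmul_mulStep_xi B N _ _ _ _

lemma stepRho_isCoassoc (ρ : N →ₗ[ℂ] B ⊗[ℂ] N) (h : IsCoassoc B N ρ) :
    IsCoassoc B (B ⊗[ℂ] N) (stepRho B N ρ) := by
  unfold IsCoassoc at h ⊢
  apply TensorProduct.ext'
  intro a n
  have hn := LinearMap.congr_fun h n
  have ha := LinearMap.congr_fun (Coalgebra.coassoc (R := ℂ) (A := B)) a
  simp only [LinearMap.comp_apply, LinearEquiv.coe_coe] at hn ha ⊢
  have hstep : stepRho B N ρ (a ⊗ₜ[ℂ] n)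
      = mulStep B N ((Coalgebra.comul (R := ℂ) a) ⊗ₜ[ℂ] (ρ n)) := by simp [stepRho]
  rw [hstep, helper1elem]
  have hxi' := LinearMap.congr_fun (xi'_eq_xi_assoc B N)
    ((LinearMap.rTensor B (Coalgebra.comul (R := ℂ)) (Coalgebra.comul (R := ℂ) a)) ⊗ₜ[ℂ]
      (LinearMap.rTensor N (Coalgebra.comul (R := ℂ)) (ρ n)))
  simp only [LinearMap.comp_apply, TensorProduct.map_tmul, LinearEquiv.coe_coe] at hxi'
  rw [hxi', ha, hn, ← helper2elem]

end Coact


/-- Convolution of two functionals. -/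
def convMap (f g : B →ₗ[ℂ] ℂ) : B →ₗ[ℂ] ℂ :=
  LinearMap.mul' ℂ ℂ ∘ₗ TensorProduct.map f g ∘ₗ Coalgebra.comul (R := ℂ)

/-- The operator `x ↦ ∑ f(x₍₋₁₎) • x₍₀₎` attached to a coaction. -/
def RopMap {N : Type*} [AddCommMonoid N] [Module ℂ N] (f : B →ₗ[ℂ] ℂ)
    (ρ : N →ₗ[ℂ] B ⊗[ℂ] N) : N →ₗ[ℂ] N :=
  (TensorProduct.lid ℂ N).toLinearMap ∘ₗ LinearMap.rTensor N f ∘ₗ ρ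

section Conv

variable (B) (N : Type*) [AddCommMonoid N] [Module ℂ N]

/-- Contract `f` on the inner and `g` on the outer `B`-leg. -/
def zMap (f g : B →ₗ[ℂ] ℂ) : B ⊗[ℂ] (B ⊗[ℂ] N) →ₗ[ℂ] N :=
  (TensorProduct.lid ℂ N).toLinearMap ∘ₗ LinearMap.rTensor N g ∘ₗ
    LinearMap.lTensor B ((TensorProduct.lid ℂ N).toLinearMap ∘ₗ LinearMap.rTensor N f)

def z2Map (f g : B →ₗ[ℂ] ℂ) : (B ⊗[ℂ] B) ⊗[ℂ] N →ₗ[ℂ] N :=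
  (TensorProduct.lid ℂ N).toLinearMap ∘ₗ
    LinearMap.rTensor N (LinearMap.mul' ℂ ℂ ∘ₗ TensorProduct.map g f)

lemma claim1 (f g : B →ₗ[ℂ] ℂ) (ρ : N →ₗ[ℂ] B ⊗[ℂ] N) (w : B ⊗[ℂ] N) :
    RopMap f ρ ((TensorProduct.lid ℂ N) (LinearMap.rTensor N g w))
      = zMap B N f g (LinearMap.lTensor B ρ w) := by
  induction w using TensorProduct.induction_on with
  | zero => simp
  | add w₁ w₂ h₁ h₂ => simp only [map_add, h₁, h₂]
  | tmul a n =>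
    simp [zMap, RopMap, TensorProduct.lid_tmul, TensorProduct.smul_tmul', map_smul]

lemma claim2 (f g : B →ₗ[ℂ] ℂ) (w : B ⊗[ℂ] N) :
    (TensorProduct.lid ℂ N) (LinearMap.rTensor N (convMap g f) w)
      = z2Map B N f g (LinearMap.rTensor N (Coalgebra.comul (R := ℂ)) w) := by
  induction w using TensorProduct.induction_on with
  | zero => simp
  | add w₁ w₂ h₁ h₂ => simp only [map_add, h₁, h₂]
  | tmul a n =>
    simp [z2Map, convMap, TensorProduct.lid_tmul]

lemma claim3 (f g : B →ₗ[ℂ] ℂ) (v : (B ⊗[ℂ] B) ⊗[ℂ] N) :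
    z2Map B N f g v = zMap B N f g ((TensorProduct.assoc ℂ B B N) v) := by
  induction v using TensorProduct.induction_on with
  | zero => simp
  | add v₁ v₂ h₁ h₂ => simp only [map_add, h₁, h₂]
  | tmul u n =>
    induction u using TensorProduct.induction_on with
    | zero => simp [zero_tmul]
    | add u₁ u₂ h₁ h₂ => simp only [add_tmul, map_add, h₁, h₂]
    | tmul a b =>
      simp [z2Map, zMap, TensorProduct.lid_tmul, TensorProduct.smul_tmul', map_smul, smul_smul,
        mul_comm]

lemma Rop_comp (f g : B →ₗ[ℂ] ℂ) (ρ : N →ₗ[ℂ] B ⊗[ℂ] N) (h : IsCoassoc B N ρ) :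
    RopMap f ρ ∘ₗ RopMap g ρ = RopMap (convMap g f) ρ := by
  apply LinearMap.ext
  intro x
  have hw := LinearMap.congr_fun h x
  simp only [LinearMap.comp_apply, LinearEquiv.coe_coe] at hw ⊢
  have lhs : RopMap f ρ (RopMap g ρ x)
      = RopMap f ρ ((TensorProduct.lid ℂ N) (LinearMap.rTensor N g (ρ x))) := rfl
  rw [lhs, claim1, ← hw, ← claim3, ← claim2]
  rfl

end Conv

/-- The full plaquette coaction on `T4`. -/
def P3 (B : Type*) [Ring B] [HopfAlgebra ℂ B] : T4 B →ₗ[ℂ] B ⊗[ℂ] T4 B :=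
  stepRho B (B ⊗[ℂ] (B ⊗[ℂ] B))
    (stepRho B (B ⊗[ℂ] B) (stepRho B B (Coalgebra.comul (R := ℂ))))

lemma P3_isCoassoc : IsCoassoc B (T4 B) (P3 B) :=
  stepRho_isCoassoc _ _ _ (stepRho_isCoassoc _ _ _ (stepRho_isCoassoc _ _ _ (comul_isCoassoc B)))

lemma plaquetteOp_eq : plaquetteOp B = RopMap (traceChar B) (P3 B) := by
  unfold plaquetteOp RopMap P3 stepRho comul4
  rw [LinearMap.lTensor_comp_map, LinearMap.lTensor_comp_map, LinearMap.lTensor_comp_map]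


lemma conv_traceChar [FiniteDimensional ℂ B] :
    convMap (traceChar B) (traceChar B) = (Module.finrank ℂ B : ℂ) • traceChar B := by
  apply LinearMap.ext
  intro c
  set r := ℛ ℂ c with hr
  simp only [convMap, LinearMap.comp_apply, LinearMap.smul_apply, smul_eq_mul]
  rw [← r.eq, map_sum, map_sum]
  simp only [TensorProduct.map_tmul, LinearMap.mul'_apply]
  exact key_trace c r

lemma RopMap_smul {N : Type*} [AddCommMonoid N] [Module ℂ N] (f : B →ₗ[ℂ] ℂ)
    (ρ : N →ₗ[ℂ] B ⊗[ℂ] N) (c : ℂ) :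
    RopMap (c • f) ρ = c • RopMap f ρ := by
  apply LinearMap.ext
  intro x
  simp only [RopMap, LinearMap.comp_apply, LinearMap.smul_apply]
  rw [LinearMap.rTensor_smul]
  simp

end Aux

theorem plaquetteOp_pow (A : Type*) [Ring A] [HopfAlgebra ℂ A] [FiniteDimensional ℂ A]
    (hinv : ∀ a : A, antipode (R := ℂ) (antipode (R := ℂ) a) = a) :
    (∀ k : ℕ, 1 ≤ k →
      (plaquetteOp A : Module.End ℂ (T4 A)) ^ k =
        ((Module.finrank ℂ A : ℂ) ^ (k - 1)) • plaquetteOp A) ∧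
    plaquetteOp A ∘ₗ plaquetteOp A = (Module.finrank ℂ A : ℂ) • plaquetteOp A := by
  have hBB : plaquetteOp A ∘ₗ plaquetteOp A = (Module.finrank ℂ A : ℂ) • plaquetteOp A := by
    rw [plaquetteOp_eq, Rop_comp A (T4 A) _ _ _ (P3_isCoassoc (B := A)), conv_traceChar,
      RopMap_smul]
  refine ⟨?_, hBB⟩
  intro k hk
  induction k, hk using Nat.le_induction with
  | base => simp
  | succ n hn ih =>
    rw [pow_succ, ih, smul_mul_assoc, Module.End.mul_eq_comp, hBB, smul_smul, ← pow_succ,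
      Nat.sub_add_cancel hn, Nat.add_sub_cancel]

end
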